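/- Let H and A be finitely generated abelian groups and ν : H → A a surjective homomorphism; let K = ker ν and let K̄ be the primitive closure of K. Let χ ≤ H be a subgroup, set T = V(χ), and let ρ ∈ Ĥ be a character such that ρ^m ∈ T for some integer m ≥ 1 coprime to the order (cardinality) of Tors(A). Then the set {σ ∈ Ĥ : σ(x) = 1 for all x ∈ K, and σρ⁻¹ ∈ T} is infinite if and only if the set {σ ∈ Ĥ : σ(x) = 1 for all x ∈ K̄, and σρ⁻¹ ∈ T} is infinite. (Equivalently, for W = ρT one has q⁻¹(Υ_Ā(W)) = Υ_A(W).) -/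

import Mathlib

open scoped TensorProduct Pointwise

/-- The set of surjective homomorphisms between two additive groups. -/
def EpiSet (G A : Type*) [AddGroup G] [AddGroup A] : Type _ :=
  {f : G →+ A // Function.Surjective f}

/-- Two epimorphisms are equivalent if they differ by an automorphism of the target. -/
def GammaRel (G A : Type*) [AddGroup G] [AddGroup A] (ν₁ ν₂ : EpiSet G A) : Prop :=
  ∃ α : A ≃+ A, ∀ g : G, α (ν₁.1 g) = ν₂.1 g

/-- The parameter set `Γ(G,A) = Epi(G,A)/Aut(A)`. -/
def GammaSet (G A : Type*) [AddGroup G] [AddGroup A] : Type _ :=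
  Quot (GammaRel G A)

/-- The character group of an (additively written) abelian group. -/
abbrev CharGp (H : Type*) [AddCommGroup H] : Type _ := Multiplicative H →* ℂˣ

/-- `V(ξ)`, the set of characters vanishing (i.e. taking value 1) on a subgroup `ξ`. -/
def charV {H : Type*} [AddCommGroup H] (ξ : AddSubgroup H) : Set (CharGp H) :=
  {ρ | ∀ x ∈ ξ, ρ (Multiplicative.ofAdd x) = 1}

/-- The primitive closure of a subgroup of an abelian group. -/
def pclose {H : Type*} [AddCommGroup H] (ξ : AddSubgroup H) : AddSubgroup H where
  carrier := {x | ∃ m : ℕ, 0 < m ∧ m • x ∈ ξ}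
  zero_mem' := ⟨1, Nat.one_pos, by simpa using ξ.zero_mem⟩
  add_mem' := by
    rintro a b ⟨m, hm, ha⟩ ⟨k, hk, hb⟩
    refine ⟨m * k, Nat.mul_pos hm hk, ?_⟩
    rw [smul_add]
    exact ξ.add_mem (by rw [mul_comm, mul_smul]; exact ξ.nsmul_mem ha k)
      (by rw [mul_smul]; exact ξ.nsmul_mem hb m)
  neg_mem' := by
    rintro a ⟨m, hm, ha⟩
    exact ⟨m, hm, by rw [smul_neg]; exact ξ.neg_mem ha⟩

/-- A subgroup is primitive if it equals its primitive closure. -/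
def IsPrimitiveSub {H : Type*} [AddCommGroup H] (ξ : AddSubgroup H) : Prop :=
  pclose ξ = ξ

/-- The determinant group `ξ̄/ξ` of a subgroup. -/
def detGroup {H : Type*} [AddCommGroup H] (ξ : AddSubgroup H) : Type _ :=
  ↥(pclose ξ) ⧸ ξ.addSubgroupOf (pclose ξ)

noncomputable instance {H : Type*} [AddCommGroup H] (ξ : AddSubgroup H) :
    AddCommGroup (detGroup ξ) := by unfold detGroup; infer_instance

/-- The rank of a f.g. abelian group, `dim_ℚ (B ⊗ ℚ)`. -/
noncomputable def rkOf (B : Type*) [AddCommGroup B] : ℕ :=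
  Module.finrank ℚ (ℚ ⊗[ℤ] B)

/-- The largest order of an element of `K`. -/
noncomputable def maxOrder (K : Type*) [AddGroup K] : ℕ :=
  sSup (Set.range fun g : K => addOrderOf g)

/-- The translate `η·V(ξ)` of the "subtorus" `V(ξ)` by the character `η`. -/
def transTorus {H : Type*} [AddCommGroup H] (η : CharGp H) (ξ : AddSubgroup H) :
    Set (CharGp H) :=
  (η * ·) '' charV ξ

/-- `S` is a maximal positive-dimensional torsion-translated subtorus inside `W`. -/
def MaxTransTorusIn {H : Type*} [AddCommGroup H] (S W : Set (CharGp H)) : Prop :=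
  S.Infinite ∧ S ⊆ W ∧
    ∀ (χ : AddSubgroup H) (η' : CharGp H), IsPrimitiveSub χ → IsOfFinOrder η' →
      S ⊆ transTorus η' χ → transTorus η' χ ⊆ W → transTorus η' χ = S

/-- The collection `Ξ_d(W)` of subgroups of `H` attached to a subvariety `W` of the
character group. -/
def Xi {H : Type*} [AddCommGroup H] (d : ℕ) (W : Set (CharGp H)) : Set (AddSubgroup H) :=
  {ξ | IsAddCyclic (detGroup ξ) ∧ Nat.card (detGroup ξ) ∣ d ∧
    ∃ η : CharGp H, IsOfFinOrder η ∧ orderOf η = Nat.card (detGroup ξ) ∧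
      (∀ x ∈ ξ, η (Multiplicative.ofAdd x) = 1) ∧
      {x : H | x ∈ pclose ξ ∧ η (Multiplicative.ofAdd x) = 1} = (ξ : Set H) ∧
      MaxTransTorusIn (transTorus η (pclose ξ)) W}

/-- Evaluation of an element of the group algebra `ℂ[H]` at a character, i.e. the
`ℂ`-algebra homomorphism `ℂ[H] → ℂ` extending the character. -/
noncomputable def evalAt {H : Type*} [AddCommGroup H] (ρ : CharGp H) :
    AddMonoidAlgebra ℂ H →ₐ[ℂ] ℂ :=
  AddMonoidAlgebra.lift (R := ℂ) (M := H) (A := ℂ) ((Units.coeHom ℂ).comp ρ)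

/-- `W` is a Zariski closed subset of the character group. -/
def IsZarClosed {H : Type*} [AddCommGroup H] (W : Set (CharGp H)) : Prop :=
  ∃ S : Set (AddMonoidAlgebra ℂ H), W = {ρ | ∀ f ∈ S, evalAt ρ f = 0}

/-- The support of a module: the set of maximal ideals at which the localization is
nonzero. -/
def suppMax (S M : Type*) [CommRing S] [AddCommGroup M] [Module S M] :
    Set (MaximalSpectrum S) :=
  {m | haveI := m.isMaximal.isPrime; Nontrivial (LocalizedModule m.asIdeal.primeCompl M)}

section Aux

/-- The `N`-torsion of the character group of a f.g. abelian group is finite. -/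
lemma charTorsion_finite {H : Type*} [AddCommGroup H] [AddGroup.FG H] (N : ℕ) (hN : 0 < N) :
    {τ : CharGp H | τ ^ N = 1}.Finite := by
  haveI : NeZero N := ⟨hN.ne'⟩
  obtain ⟨S, hSclo, hSfin⟩ :=
    Group.fg_iff.mp (inferInstance : Group.FG (Multiplicative H))
  haveI : Finite ↥S := hSfin
  have key : ∀ τ : {τ : CharGp H | τ ^ N = 1}, ∀ s : S,
      ((τ : CharGp H) (s : Multiplicative H)) ^ N = 1 := by
    rintro ⟨τ, hτ⟩ s
    have := congrFun (congrArg (fun f : CharGp H => (f : Multiplicative H → ℂˣ)) hτ)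
      (s : Multiplicative H)
    simpa using this
  set F : {τ : CharGp H | τ ^ N = 1} → (S → rootsOfUnity N ℂ) :=
    fun τ s => ⟨(τ : CharGp H) (s : Multiplicative H),
      (mem_rootsOfUnity N _).mpr (key τ s)⟩ with hF
  have hinj : Function.Injective F := by
    rintro ⟨τ₁, h₁⟩ ⟨τ₂, h₂⟩ h
    ext1
    refine MonoidHom.eq_of_eqOn_dense hSclo ?_
    intro s hs
    have := congrFun h ⟨s, hs⟩
    simpa [hF, Subtype.ext_iff] using this
  haveI : Finite {τ : CharGp H | τ ^ N = 1} := Finite.of_injective F hinj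
  exact Set.toFinite _

end Aux

/-- Suppose `ρ^m ∈ T = V(χ)` for some `m ≥ 1` coprime to the order of `Tors(A)`.  Then
`im(ν̂) ∩ ρT` is infinite iff `im` of the induced map on maximal torsion-free quotients,
i.e. `V(ker ν̄) = V(primitive closure of ker ν)`, meets `ρT` in an infinite set. -/
theorem statement15 {H A : Type*} [AddCommGroup H] [AddGroup.FG H]
    [AddCommGroup A] [AddGroup.FG A]
    (ν : H →+ A) (hν : Function.Surjective ν)
    (χ : AddSubgroup H) (ρ : CharGp H) (m : ℕ) (hm : 1 ≤ m)
    (hcop : Nat.Coprime m (Nat.card ↥(AddCommGroup.torsion A)))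
    (hρ : ρ ^ m ∈ charV χ) :
    {σ : CharGp H | (∀ x ∈ ν.ker, σ (Multiplicative.ofAdd x) = 1) ∧
        σ * ρ⁻¹ ∈ charV χ}.Infinite ↔
    {σ : CharGp H | (∀ x ∈ pclose ν.ker, σ (Multiplicative.ofAdd x) = 1) ∧
        σ * ρ⁻¹ ∈ charV χ}.Infinite := by
  classical
  -- notation
  set K := ν.ker with hK
  have hsub : (K : AddSubgroup H) ≤ pclose K := fun x hx => ⟨1, Nat.one_pos, by simpa using hx⟩
  constructor
  · -- hard direction
    intro h1
    set n := Nat.card ↥(AddCommGroup.torsion A) with hn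
    -- the torsion subgroup of A is finite
    haveI : Module.Finite ℤ A := Module.Finite.iff_addGroup_fg.mpr ‹AddGroup.FG A›
    haveI : IsNoetherian ℤ A := inferInstance
    haveI hfinT : Finite ↥(AddCommGroup.torsion A) := by
      have hfg : (Submodule.torsion ℤ A).FG := IsNoetherian.noetherian _
      haveI : Module.Finite ℤ ↥(Submodule.torsion ℤ A) :=
        Module.Finite.iff_fg.mpr hfg
      have h1' : Finite ↥(Submodule.torsion ℤ A) :=
        Module.finite_of_fg_torsion _ (Submodule.torsion_isTorsion)
      have h2' : Finite ↥((Submodule.torsion ℤ A).toAddSubgroup) := h1'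
      rwa [Submodule.torsion_int] at h2'
    have hnpos : 0 < n := Nat.card_pos
    haveI : NeZero n := ⟨hnpos.ne'⟩
    -- killing the primitive closure by multiplication with n
    have hkill : ∀ x ∈ pclose K, n • x ∈ K := by
      rintro x ⟨t, ht, htx⟩
      have hνx : ν x ∈ AddCommGroup.torsion A := by
        refine isOfFinAddOrder_iff_nsmul_eq_zero.mpr ⟨t, ht, ?_⟩
        rw [← map_nsmul]
        exact htx
      have : n • (⟨ν x, hνx⟩ : ↥(AddCommGroup.torsion A)) = 0 := card_nsmul_eq_zero'
      have hz : n • ν x = 0 := by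
        have := congrArg (Subtype.val) this
        simpa using this
      show n • x ∈ ν.ker
      rw [AddMonoidHom.mem_ker, map_nsmul, hz]
    -- choose the exponent N = 1 + m * k divisible by n
    set k : ℕ := ((-1 : ZMod n) * (m : ZMod n)⁻¹).val with hk
    set N : ℕ := 1 + m * k with hNdef
    have hNpos : 0 < N := Nat.succ_le_iff.mp (Nat.le_add_right 1 (m * k))
    have hndvd : n ∣ N := by
      have hmi : (m : ZMod n) * (m : ZMod n)⁻¹ = 1 := ZMod.coe_mul_inv_eq_one m hcop
      have hkc : ((k : ℕ) : ZMod n) = -1 * (m : ZMod n)⁻¹ := by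
        rw [hk]; exact ZMod.natCast_zmod_val _
      have : ((N : ℕ) : ZMod n) = 0 := by
        have h0 : ((N : ℕ) : ZMod n) = 1 + (m : ZMod n) * ((k : ℕ) : ZMod n) := by
          rw [hNdef]; push_cast; ring
        rw [h0, hkc]
        calc (1 : ZMod n) + (m : ZMod n) * (-1 * (m : ZMod n)⁻¹)
            = 1 - (m : ZMod n) * (m : ZMod n)⁻¹ := by ring
          _ = 0 := by rw [hmi, sub_self]
      rwa [ZMod.natCast_eq_zero_iff] at this
    obtain ⟨t, ht⟩ := hndvd
    -- the power map sends the first set into the second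
    have hmap : ∀ σ : CharGp H,
        ((∀ x ∈ ν.ker, σ (Multiplicative.ofAdd x) = 1) ∧ σ * ρ⁻¹ ∈ charV χ) →
        ((∀ x ∈ pclose ν.ker, (σ ^ N) (Multiplicative.ofAdd x) = 1) ∧
          (σ ^ N) * ρ⁻¹ ∈ charV χ) := by
      rintro σ ⟨hσK, hσρ⟩
      constructor
      · intro x hx
        have h1x : σ (Multiplicative.ofAdd (n • x)) = 1 := hσK _ (hkill x hx)
        have h2x : σ (Multiplicative.ofAdd x) ^ n = 1 := by
          rw [← map_pow, ← ofAdd_nsmul]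
          exact h1x
        calc (σ ^ N) (Multiplicative.ofAdd x)
            = σ (Multiplicative.ofAdd x) ^ N := by simp
          _ = (σ (Multiplicative.ofAdd x) ^ n) ^ t := by rw [← pow_mul, ← ht]
          _ = 1 := by rw [h2x, one_pow]
      · intro x hx
        have hρm : ρ (Multiplicative.ofAdd x) ^ m = 1 := by
          have := hρ x hx
          simpa using this
        have hσx : σ (Multiplicative.ofAdd x) = ρ (Multiplicative.ofAdd x) := by
          have := hσρ x hx
          simp only [MonoidHom.mul_apply, MonoidHom.inv_apply] at this
          exact mul_inv_eq_one.mp this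
        calc ((σ ^ N) * ρ⁻¹) (Multiplicative.ofAdd x)
            = σ (Multiplicative.ofAdd x) ^ N * (ρ (Multiplicative.ofAdd x))⁻¹ := by simp
          _ = ρ (Multiplicative.ofAdd x) ^ (1 + m * k) *
              (ρ (Multiplicative.ofAdd x))⁻¹ := by rw [hσx, hNdef]
          _ = ρ (Multiplicative.ofAdd x) ^ (m * k) := by
              rw [pow_add, pow_one]
              group
          _ = (ρ (Multiplicative.ofAdd x) ^ m) ^ k := by rw [pow_mul]
          _ = 1 := by rw [hρm, one_pow]
    -- conclude: the image of the first set under the N-th power map is infinite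
    set f : CharGp H → CharGp H := fun σ => σ ^ N with hf
    have himg : f '' {σ : CharGp H | (∀ x ∈ ν.ker, σ (Multiplicative.ofAdd x) = 1) ∧
        σ * ρ⁻¹ ∈ charV χ} ⊆ {σ : CharGp H |
        (∀ x ∈ pclose ν.ker, σ (Multiplicative.ofAdd x) = 1) ∧ σ * ρ⁻¹ ∈ charV χ} := by
      rintro _ ⟨σ, hσ, rfl⟩
      exact hmap σ hσ
    have hfibers : ∀ b : CharGp H, {σ : CharGp H | f σ = b}.Finite := by
      intro b
      rcases Set.eq_empty_or_nonempty {σ : CharGp H | f σ = b} with h | ⟨σ₀, hσ₀⟩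
      · rw [h]; exact Set.finite_empty
      · have hsub' : {σ : CharGp H | f σ = b} ⊆ (σ₀ * ·) '' {τ : CharGp H | τ ^ N = 1} := by
          intro σ hσ
          have hσ' : σ ^ N = b := hσ
          have hσ₀' : σ₀ ^ N = b := hσ₀
          have hptw : ∀ h : Multiplicative H, (σ h) ^ N = (σ₀ h) ^ N := by
            intro h
            have := congrArg (fun f : CharGp H => f h) (hσ'.trans hσ₀'.symm)
            simpa using this
          refine ⟨σ₀⁻¹ * σ, ?_, ?_⟩
          · show (σ₀⁻¹ * σ) ^ N = 1
            ext h
            simp [mul_pow, inv_pow, hptw h]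
            have hh := congrArg (fun u : ℂˣ => (u : ℂ)) (hptw (Multiplicative.ofAdd h))
            simp only [Units.val_pow_eq_pow_val] at hh
            rw [hh]
            exact inv_mul_cancel₀ (pow_ne_zero _ (Units.ne_zero _))
          · show σ₀ * (σ₀⁻¹ * σ) = σ
            ext h
            simp
        exact Set.Finite.subset (Set.Finite.image _ (charTorsion_finite N hNpos)) hsub'
    have himginf : (f '' {σ : CharGp H | (∀ x ∈ ν.ker, σ (Multiplicative.ofAdd x) = 1) ∧
        σ * ρ⁻¹ ∈ charV χ}).Infinite := by
      intro hfin
      refine h1 ?_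
      have hcover : {σ : CharGp H | (∀ x ∈ ν.ker, σ (Multiplicative.ofAdd x) = 1) ∧
          σ * ρ⁻¹ ∈ charV χ} ⊆ ⋃ b ∈ f '' {σ : CharGp H |
          (∀ x ∈ ν.ker, σ (Multiplicative.ofAdd x) = 1) ∧ σ * ρ⁻¹ ∈ charV χ},
          {σ : CharGp H | f σ = b} := by
        intro σ hσ
        exact Set.mem_biUnion (Set.mem_image_of_mem f hσ) rfl
      exact Set.Finite.subset (Set.Finite.biUnion hfin fun b _ => hfibers b) hcover
    exact Set.Infinite.mono himg himginf
  · -- easy direction: inclusion of sets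
    intro h2
    refine Set.Infinite.mono ?_ h2
    rintro σ ⟨hσ, hσρ⟩
    exact ⟨fun x hx => hσ x (hsub hx), hσρ⟩
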